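/- Let X be a locally Lindelöf P-space and K₁, K₂ saturated Lindelöf subsets. If K₁ ≪_c K₂ in (LQ(X), ⊇), then K₂ ⊆ int(K₁), i.e., there is an open U with K₂ ⊆ U ⊆ K₁. -/
import Mathlib


universe u

/-- A set is saturated if it equals the intersection of its open neighbourhoods. -/
def IsSaturatedSet {X : Type u} [TopologicalSpace X] (A : Set X) : Prop :=
  A = ⋂₀ {U : Set X | IsOpen U ∧ A ⊆ U}

/-- A family of sets is countably filtered (under `⊆`) if every countable subfamily
has a lower bound in the family. -/
def CntFilteredFam {X : Type u} (S : Set (Set X)) : Prop :=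
  ∀ T ⊆ S, T.Countable → ∃ L ∈ S, ∀ t ∈ T, L ⊆ t

/-- A family of sets is countably directed (under `⊆`) if every countable subfamily
has an upper bound in the family. -/
def CntDirectedFam {X : Type u} (S : Set (Set X)) : Prop :=
  ∀ T ⊆ S, T.Countable → ∃ U ∈ S, ∀ t ∈ T, t ⊆ U

/-- A space is c-well-filtered if for every countably filtered family of saturated
Lindelöf subsets whose intersection is contained in an open `U`, some member is contained in `U`. -/
def CWellFiltered (X : Type u) [TopologicalSpace X] : Prop :=
  ∀ S : Set (Set X), (∀ K ∈ S, IsSaturatedSet K ∧ IsLindelof K) →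
    CntFilteredFam S → ∀ U : Set X, IsOpen U → ⋂₀ S ⊆ U → ∃ K ∈ S, K ⊆ U

/-- A subset `D` is countably directed w.r.t. `le` if every countable subset of `D`
has an upper bound in `D`. -/
def CntDirected {α : Type u} (le : α → α → Prop) (D : Set α) : Prop :=
  ∀ E ⊆ D, E.Countable → ∃ d ∈ D, ∀ e ∈ E, le e d

/-- `a` is a least upper bound of `D` w.r.t. `le`. -/
def RIsLUB {α : Type u} (le : α → α → Prop) (D : Set α) (a : α) : Prop :=
  (∀ d ∈ D, le d a) ∧ ∀ b, (∀ d ∈ D, le d b) → le a b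

/-- Countably directed complete: every countably directed subset has a least upper bound. -/
def CDComplete {α : Type u} (le : α → α → Prop) : Prop :=
  ∀ D : Set α, CntDirected le D → ∃ a, RIsLUB le D a

/-- `x` is countably way-below `y`. -/
def CWayBelow {α : Type u} (le : α → α → Prop) (x y : α) : Prop :=
  ∀ D : Set α, CntDirected le D → ∀ a, RIsLUB le D a → le y a → ∃ d ∈ D, le x d

/-- `U` is σ-Scott open: an upper set meeting every countably directed set whose sup lies in `U`. -/
def SigmaScottOpenRel {α : Type u} (le : α → α → Prop) (U : Set α) : Prop :=
  (∀ x ∈ U, ∀ y, le x y → y ∈ U) ∧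
  ∀ D : Set α, CntDirected le D → ∀ a, RIsLUB le D a → a ∈ U → ∃ d ∈ D, d ∈ U

/-- `F` is countably filtered w.r.t. `le`: every countable subset has a lower bound in `F`. -/
def CntFilteredRel {α : Type u} (le : α → α → Prop) (F : Set α) : Prop :=
  ∀ E ⊆ F, E.Countable → ∃ l ∈ F, ∀ e ∈ E, le l e

/-- Countably approximating: countably directed complete and each `x` is the sup of
the countably directed set of elements countably way-below `x`. -/
def CntApprox {α : Type u} (le : α → α → Prop) : Prop :=
  CDComplete le ∧
    ∀ x, CntDirected le {y | CWayBelow le y x} ∧ RIsLUB le {y | CWayBelow le y x} x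

/-- `B` is a σ-basis: for each `x`, `B ∩ ⇓꜀x` is countably directed with sup `x`. -/
def IsSigmaBasis {α : Type u} (le : α → α → Prop) (B : Set α) : Prop :=
  ∀ x, CntDirected le (B ∩ {y | CWayBelow le y x}) ∧
    RIsLUB le (B ∩ {y | CWayBelow le y x}) x

/-- A P-space: every countable intersection of open sets is open. -/
def PSpace (X : Type u) [TopologicalSpace X] : Prop :=
  ∀ 𝒰 : Set (Set X), 𝒰.Countable → (∀ U ∈ 𝒰, IsOpen U) → IsOpen (⋂₀ 𝒰)

/-- Locally Lindelöf: every open neighbourhood contains a saturated Lindelöf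
neighbourhood. -/
def LocallyLindelofSp (X : Type u) [TopologicalSpace X] : Prop :=
  ∀ U : Set X, IsOpen U → ∀ x ∈ U, ∃ K : Set X,
    IsSaturatedSet K ∧ IsLindelof K ∧ x ∈ interior K ∧ K ⊆ U

/-- The saturated Lindelöf subsets of `X`. -/
def LQ (X : Type u) [TopologicalSpace X] : Type u :=
  {K : Set X // IsSaturatedSet K ∧ IsLindelof K}

/-- The order of `(LQ(X), ⊇)`: reverse inclusion. -/
def lqLe {X : Type u} [TopologicalSpace X] (A B : LQ X) : Prop := B.1 ⊆ A.1


lemma sat_biUnion_aux {X : Type u} [TopologicalSpace X] {ι : Type u} {t : Set ι}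
    {K : ι → Set X} (h : ∀ i ∈ t, IsSaturatedSet (K i)) :
    IsSaturatedSet (⋃ i ∈ t, K i) := by
  apply Set.Subset.antisymm
  · intro x hx
    exact fun U hU => hU.2 hx
  · intro x hx
    by_contra hxA
    have hV : ∀ i ∈ t, ∃ V : Set X, IsOpen V ∧ K i ⊆ V ∧ x ∉ V := by
      intro i hi
      have hxi : x ∉ K i := fun hxi => hxA (Set.mem_biUnion hi hxi)
      rw [h i hi] at hxi
      simp only [Set.mem_sInter, Set.mem_setOf_eq, not_forall] at hxi
      obtain ⟨V, ⟨hVo, hVs⟩, hxV⟩ := hxi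
      exact ⟨V, hVo, hVs, hxV⟩
    choose! V hVo hVs hxV using hV
    have := hx (⋃ i ∈ t, V i) ⟨isOpen_biUnion (fun i hi => hVo i hi),
      Set.iUnion₂_mono fun i hi => hVs i hi⟩
    obtain ⟨i, hi, hxi⟩ := Set.mem_iUnion₂.mp this
    exact hxV i hi hxi

/-- Key lemma: a Lindelöf set inside an open `U` has a saturated Lindelöf
neighbourhood inside `U`. -/
lemma key_nbhd {X : Type u} [TopologicalSpace X] (hLL : LocallyLindelofSp X)
    {A U : Set X} (hA : IsLindelof A) (hU : IsOpen U) (hAU : A ⊆ U) :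
    ∃ K : Set X, IsSaturatedSet K ∧ IsLindelof K ∧ A ⊆ interior K ∧ K ⊆ U := by
  have hx : ∀ x : A, ∃ K : Set X,
      IsSaturatedSet K ∧ IsLindelof K ∧ (x : X) ∈ interior K ∧ K ⊆ U :=
    fun x => hLL U hU x (hAU x.2)
  choose Kx hsat hlin hmem hsub using hx
  have hcov : A ⊆ ⋃ x : A, interior (Kx x) := by
    intro y hy
    exact Set.mem_iUnion.mpr ⟨⟨y, hy⟩, hmem ⟨y, hy⟩⟩
  obtain ⟨t, htc, htcov⟩ := hA.elim_countable_subcover (fun x : A => interior (Kx x))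
    (fun _ => isOpen_interior) hcov
  refine ⟨⋃ x ∈ t, Kx x, sat_biUnion_aux (fun i hi => hsat i),
    htc.isLindelof_biUnion (fun i _ => hlin i), ?_, Set.iUnion₂_subset fun i _ => hsub i⟩
  intro y hy
  have h1 : y ∈ ⋃ x ∈ t, interior (Kx x) := htcov hy
  have h2 : (⋃ x ∈ t, interior (Kx x)) ⊆ ⋃ x ∈ t, Kx x :=
    Set.iUnion₂_mono fun i _ => interior_subset
  exact interior_maximal h2 (isOpen_biUnion fun i _ => isOpen_interior) h1

/-- in a locally Lindelöf P-space, `K₁ ≪꜀ K₂` in `(LQ(X), ⊇)` implies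
`K₂ ⊆ int K₁`, i.e. there is an open `U` with `K₂ ⊆ U ⊆ K₁`. -/
theorem stmt17 {X : Type u} [TopologicalSpace X] (hLL : LocallyLindelofSp X)
    (hP : PSpace X) (K₁ K₂ : LQ X) (h : CWayBelow (lqLe (X := X)) K₁ K₂) :
    K₂.1 ⊆ interior K₁.1 ∧ ∃ U : Set X, IsOpen U ∧ K₂.1 ⊆ U ∧ U ⊆ K₁.1 := by
  classical
  set D : Set (LQ X) := {d : LQ X | K₂.1 ⊆ interior d.1} with hD
  -- existence of elements of D inside any open superset of K₂
  have hmk : ∀ U : Set X, IsOpen U → K₂.1 ⊆ U → ∃ d ∈ D, d.1 ⊆ U := by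
    intro U hUo hUs
    obtain ⟨K, hsat, hlin, hint, hsub⟩ := key_nbhd hLL K₂.2.2 hUo hUs
    exact ⟨⟨K, hsat, hlin⟩, hint, hsub⟩
  have hdir : CntDirected (lqLe (X := X)) D := by
    intro E hE hEc
    set 𝒰 : Set (Set X) := (fun e : LQ X => interior e.1) '' E with h𝒰
    have h𝒰c : 𝒰.Countable := hEc.image _
    have h𝒰o : ∀ V ∈ 𝒰, IsOpen V := by
      rintro V ⟨e, -, rfl⟩; exact isOpen_interior
    have hopen : IsOpen (⋂₀ 𝒰) := hP 𝒰 h𝒰c h𝒰o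
    have hsub : K₂.1 ⊆ ⋂₀ 𝒰 := by
      intro y hy
      rintro V ⟨e, he, rfl⟩
      exact hE he hy
    obtain ⟨d, hdD, hdsub⟩ := hmk _ hopen hsub
    refine ⟨d, hdD, ?_⟩
    intro e he
    have : d.1 ⊆ interior e.1 := fun y hy => hdsub hy _ ⟨e, he, rfl⟩
    exact this.trans interior_subset
  have hlub : RIsLUB (lqLe (X := X)) D K₂ := by
    constructor
    · intro d hd
      exact hd.trans interior_subset
    · intro b hb
      intro x hx
      by_contra hxK
      have hsatK₂ := K₂.2.1
      rw [hsatK₂] at hxK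
      simp only [Set.mem_sInter, Set.mem_setOf_eq, not_forall] at hxK
      obtain ⟨U, ⟨hUo, hUs⟩, hxU⟩ := hxK
      obtain ⟨d, hdD, hdsub⟩ := hmk U hUo hUs
      exact hxU (hdsub (hb d hdD hx))
  obtain ⟨d, hdD, hdle⟩ := h D hdir K₂ hlub (Set.Subset.refl _)
  have h1 : K₂.1 ⊆ interior K₁.1 :=
    hdD.trans (interior_mono hdle)
  exact ⟨h1, interior d.1, isOpen_interior, hdD, interior_subset.trans hdle⟩
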